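/- Let C be algebraically closed of characteristic zero, n ≥ 2, and a₁,…,a_d distinct positive integers with 1 ≤ a_i < n and a_i ≠ n − a_j for all i, j. Let W₁,…,W_d be n-dimensional C-vector spaces, W = ⊕ W_i, and let k ⊆ ⊕_{i=1}^d sl(W_i) be a semisimple Lie subalgebra such that (i) each projection k → sl(W_i) is surjective, and (ii) there exists a semisimple element f ∈ k acting on each W_i with exactly two eigenvalues of multiplicities a_i and n − a_i. Then k = ⊕_{i=1}^d sl(W_i). -/

import Mathlib

open Module

section PiLie

variable (R : Type*) [CommRing R] (ι : Type*)
variable (L : ι → Type*) [∀ i, LieRing (L i)] [∀ i, LieAlgebra R (L i)]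

/-- The product of a family of Lie rings, with componentwise bracket. -/
instance Pi.instLieRing : LieRing (∀ i, L i) where
  bracket x y := fun i => ⁅x i, y i⁆
  add_lie x y z := by funext i; simp [add_lie]
  lie_add x y z := by funext i; simp [lie_add]
  lie_self x := by funext i; simp
  leibniz_lie x y z := by funext i; simp

/-- The product of a family of Lie algebras. -/
instance Pi.instLieAlgebra : LieAlgebra R (∀ i, L i) where
  lie_smul t x y := by funext i; exact lie_smul t (x i) (y i)

end PiLie

attribute [local instance 100] LieRing.ofAssociativeRing



open Module Matrix


namespace Stmt15Aux

set_option linter.unusedSectionVars false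
set_option maxHeartbeats 1000000

variable {C : Type*} [Field C] [CharZero C]
variable {V : Type*} [AddCommGroup V] [Module C V] [FiniteDimensional C V]

private lemma triple_bracket (p q : Fin n) (hpq : p ≠ q) (s : Matrix (Fin n) (Fin n) C) :
    (Matrix.single p q (1:C)) * ((Matrix.single p q (1:C)) * s - s * (Matrix.single p q (1:C)))
      - ((Matrix.single p q (1:C)) * s - s * (Matrix.single p q (1:C))) * (Matrix.single p q (1:C))
      = (-(2 * s q p)) • Matrix.single p q (1:C) := by
  have h0 : (Matrix.single p q (1:C)) * (Matrix.single p q (1:C)) = 0 :=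
    Matrix.single_mul_single_of_ne (1:C) p q p (Ne.symm hpq) 1
  have h1 : (Matrix.single p q (1:C)) * s * (Matrix.single p q (1:C))
      = (s q p) • Matrix.single p q (1:C) := by
    ext i l
    by_cases hl : l = q
    · subst hl
      by_cases hi : i = p
      · subst hi; simp
      · simp [hi, Ne.symm hi]
    · simp [hl, Ne.symm hl]
  calc (Matrix.single p q (1:C)) * ((Matrix.single p q (1:C)) * s - s * (Matrix.single p q (1:C)))
      - ((Matrix.single p q (1:C)) * s - s * (Matrix.single p q (1:C))) * (Matrix.single p q (1:C))
      = (Matrix.single p q (1:C)) * (Matrix.single p q (1:C)) * s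
        - 2 • ((Matrix.single p q (1:C)) * s * (Matrix.single p q (1:C)))
        + s * ((Matrix.single p q (1:C)) * (Matrix.single p q (1:C))) := by
        simp only [mul_sub, sub_mul, mul_assoc, two_smul]; abel
    _ = (-(2 * s q p)) • Matrix.single p q (1:C) := by
        rw [h0, h1]; simp only [Matrix.zero_mul, Matrix.mul_zero, zero_sub, add_zero]; module

private lemma matKey (hn : 2 ≤ n) (S : Submodule C (Matrix (Fin n) (Fin n) C))
    (hS : ∀ z : Matrix (Fin n) (Fin n) C, ∀ x ∈ S, z * x - x * z ∈ S)
    (htr : ∀ x ∈ S, Matrix.trace x = 0)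
    (x₀ : Matrix (Fin n) (Fin n) C) (hx₀ : x₀ ∈ S) (hx0 : x₀ ≠ 0) :
    ∀ u : Matrix (Fin n) (Fin n) C, Matrix.trace u = 0 → u ∈ S := by
  classical
  have colrule : ∀ a b c : Fin n, c ≠ b → Matrix.single a b (1:C) ∈ S →
      Matrix.single c b (1:C) ∈ S := by
    intro a b c hcb hab
    have := hS (Matrix.single c a (1:C)) _ hab
    rwa [Matrix.single_mul_single_same, Matrix.single_mul_single_of_ne _ _ _ _ (Ne.symm hcb), one_mul,
      sub_zero] at this
  have rowrule : ∀ a b c : Fin n, c ≠ a → Matrix.single a b (1:C) ∈ S →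
      Matrix.single a c (1:C) ∈ S := by
    intro a b c hca hab
    have := hS (Matrix.single b c (1:C)) _ hab
    rw [Matrix.single_mul_single_of_ne _ _ _ _ hca, Matrix.single_mul_single_same, one_mul,
      zero_sub] at this
    simpa using S.neg_mem this
  have fliprule : ∀ a b : Fin n, a ≠ b → Matrix.single a b (1:C) ∈ S →
      Matrix.single b a (1:C) ∈ S := by
    intro a b hab h
    have h2 := hS (Matrix.single b a (1:C)) _ (hS (Matrix.single b a (1:C)) _ h)
    rw [triple_bracket b a (Ne.symm hab)] at h2
    rw [Matrix.single_apply_same] at h2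
    have h3 := S.smul_mem (-(2 * (1:C)))⁻¹ h2
    rw [smul_smul, inv_mul_cancel₀ (by norm_num), one_smul] at h3
    exact h3
  have step0 : ∃ p q : Fin n, p ≠ q ∧ Matrix.single p q (1:C) ∈ S := by
    by_cases hoff : ∃ p q : Fin n, p ≠ q ∧ x₀ q p ≠ 0
    · obtain ⟨p, q, hpq, hne⟩ := hoff
      have h2 := hS (Matrix.single p q (1:C)) _ (hS (Matrix.single p q (1:C)) _ hx₀)
      rw [triple_bracket p q hpq] at h2
      have h3 := S.smul_mem (-(2 * x₀ q p))⁻¹ h2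
      rw [smul_smul, inv_mul_cancel₀ (by simp [hne]), one_smul] at h3
      exact ⟨p, q, hpq, h3⟩
    · push_neg at hoff
      have hdiag : ∀ p q : Fin n, p ≠ q → x₀ p q = 0 := fun p q h => hoff q p (Ne.symm h)
      have hne : ∃ p q : Fin n, p ≠ q ∧ x₀ p p ≠ x₀ q q := by
        by_contra hcon
        push_neg at hcon
        have hall : ∀ p q : Fin n, x₀ p p = x₀ q q := by
          intro p q
          by_cases h : p = q
          · rw [h]
          · exact hcon p q h
        apply hx0
        have htr0 := htr x₀ hx₀
        ext i j
        by_cases h : i = j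
        · subst h
          have hth : Matrix.trace x₀ = (n : C) * x₀ i i := by
            simp only [Matrix.trace, Matrix.diag]
            rw [Finset.sum_congr rfl (fun p _ => hall p i)]
            simp [Finset.card_univ, mul_comm]
          rw [hth] at htr0
          have hn0 : (n : C) ≠ 0 := Nat.cast_ne_zero.mpr (by omega)
          simpa [hn0] using htr0
        · simpa using hdiag i j h
      obtain ⟨p, q, hpq, hne⟩ := hne
      have key : Matrix.single p q (1:C) * x₀ - x₀ * Matrix.single p q (1:C)
          = (x₀ q q - x₀ p p) • Matrix.single p q (1:C) := by
        ext i l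
        by_cases hi : i = p <;> by_cases hl : l = q
        · subst hi; subst hl
          simp
        · subst hi
          rw [Matrix.sub_apply, Matrix.single_mul_apply_same,
            Matrix.mul_single_apply_of_ne _ _ _ _ _ hl,
            hdiag q l (fun h => hl h.symm)]
          rw [Matrix.smul_apply, Matrix.single_apply_of_col_ne _ _ (fun h => hl h.symm)]
          simp
        · subst hl
          rw [Matrix.sub_apply, Matrix.mul_single_apply_same,
            Matrix.single_mul_apply_of_ne _ _ _ _ _ hi,
            hdiag i p hi]
          rw [Matrix.smul_apply, Matrix.single_apply_of_row_ne (fun h => hi h.symm)]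
          simp
        · rw [Matrix.sub_apply, Matrix.mul_single_apply_of_ne _ _ _ _ _ hl,
            Matrix.single_mul_apply_of_ne _ _ _ _ _ hi]
          rw [Matrix.smul_apply, Matrix.single_apply_of_row_ne (fun h => hi h.symm)]
          simp
      have h2 := hS (Matrix.single p q (1:C)) _ hx₀
      rw [key] at h2
      have h3 := S.smul_mem (x₀ q q - x₀ p p)⁻¹ h2
      rw [smul_smul, inv_mul_cancel₀ (sub_ne_zero.mpr (Ne.symm hne)), one_smul] at h3
      exact ⟨p, q, hpq, h3⟩
  obtain ⟨p, q, hpq, hEpq⟩ := step0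
  have alloff : ∀ i j : Fin n, i ≠ j → Matrix.single i j (1:C) ∈ S := by
    intro i j hij
    by_cases hiq : i = q
    · have hqp : Matrix.single q p (1:C) ∈ S := fliprule p q hpq hEpq
      rw [hiq]
      exact rowrule q p j (fun h => hij (hiq.trans h.symm)) hqp
    · have hiq' : Matrix.single i q (1:C) ∈ S := colrule p q i hiq hEpq
      exact rowrule i q j (Ne.symm hij) hiq'
  obtain ⟨i0⟩ : Nonempty (Fin n) := ⟨⟨0, by omega⟩⟩
  have hdiagS : ∀ i : Fin n, i ≠ i0 → Matrix.single i i (1:C) - Matrix.single i0 i0 (1:C) ∈ S := by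
    intro i hi
    have := hS (Matrix.single i i0 (1:C)) _ (alloff i0 i (Ne.symm hi))
    rwa [Matrix.single_mul_single_same, Matrix.single_mul_single_same, one_mul] at this
  -- spanning
  intro u hu
  have hsplit : ∀ i : Fin n, (∑ j, Matrix.single i j (u i j))
      = (∑ j, if i = j then 0 else Matrix.single i j (u i j)) + Matrix.single i i (u i i) := by
    intro i
    have hterm : ∀ j : Fin n, Matrix.single i j (u i j)
        = (if i = j then Matrix.single i j (u i j) else 0)
          + (if i = j then 0 else Matrix.single i j (u i j)) := by
      intro j; by_cases h : i = j <;> simp [h]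
    rw [Finset.sum_congr rfl (fun j _ => hterm j), Finset.sum_add_distrib, Finset.sum_ite_eq]
    simp [add_comm]
  have hrep : u = (∑ i, ∑ j, if i = j then 0 else Matrix.single i j (u i j))
      + ∑ i, Matrix.single i i (u i i) := by
    conv_lhs => rw [matrix_eq_sum_single u]
    rw [Finset.sum_congr rfl (fun i _ => hsplit i), Finset.sum_add_distrib]
  have hA : (∑ i, ∑ j, if i = j then 0 else Matrix.single i j (u i j)) ∈ S := by
    apply Submodule.sum_mem; intro i _
    apply Submodule.sum_mem; intro j _
    by_cases h : i = j
    · simp [h]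
    · have : Matrix.single i j (u i j) = u i j • Matrix.single i j (1:C) := by
        simp [smul_single, smul_eq_mul]
      simp only [h, if_false, this]
      exact S.smul_mem _ (alloff i j h)
  have hB : (∑ i, Matrix.single i i (u i i)) ∈ S := by
    have hB1 : (∑ i, Matrix.single i0 i0 (u i i)) = 0 := by
      have : (∑ i, Matrix.single i0 i0 (u i i)) = Matrix.single i0 i0 (Matrix.trace u) := by
        ext a b
        rw [Matrix.sum_apply]
        by_cases h : i0 = a ∧ i0 = b
        · obtain ⟨h1, h2⟩ := h; subst h1; subst h2
          simp [Matrix.trace, Matrix.diag]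
        · rw [Matrix.single_apply_of_ne _ _ _ _ _ h]
          exact Finset.sum_eq_zero (fun i _ => Matrix.single_apply_of_ne _ _ _ _ _ h)
      rw [this, hu, single_zero]
    have : (∑ i, Matrix.single i i (u i i))
        = ∑ i, (Matrix.single i i (u i i) - Matrix.single i0 i0 (u i i)) := by
      rw [Finset.sum_sub_distrib, hB1, sub_zero]
    rw [this]
    apply Submodule.sum_mem; intro i _
    by_cases h : i = i0
    · subst h; simp
    · have : Matrix.single i i (u i i) - Matrix.single i0 i0 (u i i)
          = u i i • (Matrix.single i i (1:C) - Matrix.single i0 i0 (1:C)) := by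
        rw [smul_sub]
        simp [smul_single, smul_eq_mul]
      rw [this]
      exact S.smul_mem _ (hdiagS i h)
  rw [hrep]
  exact S.add_mem hA hB


private lemma endKey (hrank : 2 ≤ finrank C V)
    (S : Submodule C (Module.End C V))
    (hS : ∀ z : Module.End C V, LinearMap.trace C V z = 0 → ∀ x ∈ S, z * x - x * z ∈ S)
    (htr : ∀ x ∈ S, LinearMap.trace C V x = 0)
    (x₀ : Module.End C V) (hx₀ : x₀ ∈ S) (hx0 : x₀ ≠ 0) :
    ∀ u : Module.End C V, LinearMap.trace C V u = 0 → u ∈ S := by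
  classical
  set b := Module.finBasis C V with hb
  set T := LinearMap.toMatrix b b with hT
  have hn0 : ((finrank C V : C)) ≠ 0 := Nat.cast_ne_zero.mpr (by omega)
  have hS' : ∀ z : Module.End C V, ∀ x ∈ S, z * x - x * z ∈ S := by
    intro z x hx
    set c : C := LinearMap.trace C V z / (finrank C V : C) with hc
    have h1 : LinearMap.trace C V (z - c • 1) = 0 := by
      rw [map_sub, _root_.map_smul, LinearMap.trace_one, hc, smul_eq_mul]
      field_simp
      simp
    have h2 := hS _ h1 x hx
    have h3 : (z - c • 1) * x - x * (z - c • 1) = z * x - x * z := by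
      simp [sub_mul, mul_sub, smul_mul_assoc, mul_smul_comm]
    rwa [h3] at h2
  have htrT : ∀ x : Module.End C V, Matrix.trace (T x) = LinearMap.trace C V x := by
    intro x
    rw [LinearMap.trace_eq_matrix_trace C b x]
  have hmul : ∀ x y : Module.End C V, T (x * y) = T x * T y := fun x y =>
    LinearMap.toMatrix_mul b x y
  have hmain := matKey hrank (S.map (T : Module.End C V ≃ₗ[C] Matrix _ _ C).toLinearMap)
    (by
      rintro z' x' ⟨x, hx, rfl⟩
      refine ⟨(T.symm z') * x - x * (T.symm z'), hS' _ x hx, ?_⟩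
      simp only [LinearEquiv.coe_coe, map_sub, hmul]
      simp)
    (by
      rintro x' ⟨x, hx, rfl⟩
      simpa [htrT] using htr x hx)
    (T x₀) ⟨x₀, hx₀, rfl⟩
    (by simpa using (LinearEquiv.map_eq_zero_iff (T : Module.End C V ≃ₗ[C] Matrix _ _ C)).not.mpr hx0)
  intro u hu
  obtain ⟨x, hx, hxu⟩ := hmain (T u) (by rw [htrT]; exact hu)
  have : x = u := T.injective hxu
  rwa [this] at hx

private lemma exists_traceless_pair (hrank : 2 ≤ finrank C V) :
    ∃ v w : Module.End C V, LinearMap.trace C V v = 0 ∧ LinearMap.trace C V w = 0 ∧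
      v ≠ 0 ∧ v * w - w * v ≠ 0 := by
  classical
  set b := Module.finBasis C V with hb
  set T := LinearMap.toMatrix b b with hT
  have htrT : ∀ x : Module.End C V, LinearMap.trace C V x = Matrix.trace (T x) :=
    fun x => LinearMap.trace_eq_matrix_trace C b x
  have h01 : (⟨0, by omega⟩ : Fin (finrank C V)) ≠ ⟨1, by omega⟩ := by
    intro h; simpa using congrArg Fin.val h
  set E01 : Matrix (Fin (finrank C V)) (Fin (finrank C V)) C :=
    Matrix.single ⟨0, by omega⟩ ⟨1, by omega⟩ 1 with hE01
  set E10 : Matrix (Fin (finrank C V)) (Fin (finrank C V)) C :=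
    Matrix.single ⟨1, by omega⟩ ⟨0, by omega⟩ 1 with hE10
  refine ⟨T.symm E01, T.symm E10, ?_, ?_, ?_, ?_⟩
  · rw [htrT, LinearEquiv.apply_symm_apply]
    simp only [hE01, Matrix.trace, Matrix.diag]
    exact Finset.sum_eq_zero fun x _ => Matrix.single_apply_of_ne _ _ _ _ _
      (by rintro ⟨rfl, h2⟩; exact h01 h2.symm)
  · rw [htrT, LinearEquiv.apply_symm_apply]
    simp only [hE10, Matrix.trace, Matrix.diag]
    exact Finset.sum_eq_zero fun x _ => Matrix.single_apply_of_ne _ _ _ _ _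
      (by rintro ⟨rfl, h2⟩; exact h01 h2)
  · intro h
    have h2 : E01 = 0 := by rw [← LinearEquiv.apply_symm_apply T E01, h, map_zero]
    have h3 := congrFun (congrFun h2 ⟨0, by omega⟩) ⟨1, by omega⟩
    rw [hE01, Matrix.single_apply_same] at h3
    simpa using h3
  · intro h
    have hT0 : T (T.symm E01 * T.symm E10 - T.symm E10 * T.symm E01) = 0 := by
      rw [h, map_zero]
    rw [map_sub] at hT0
    rw [show T (T.symm E01 * T.symm E10) = T (T.symm E01) * T (T.symm E10) from
      LinearMap.toMatrix_mul b _ _] at hT0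
    rw [show T (T.symm E10 * T.symm E01) = T (T.symm E10) * T (T.symm E01) from
      LinearMap.toMatrix_mul b _ _] at hT0
    rw [LinearEquiv.apply_symm_apply, LinearEquiv.apply_symm_apply] at hT0
    have h4 : (E01 * E10 - E10 * E01) ⟨0, by omega⟩ ⟨0, by omega⟩ = 0 := by rw [hT0]; rfl
    rw [Matrix.sub_apply, hE01, hE10, Matrix.single_mul_single_same, Matrix.single_mul_single_same,
      one_mul, Matrix.single_apply_same,
      Matrix.single_apply_of_row_ne (Ne.symm h01)] at h4
    simpa using h4


private lemma endKey' (hrank : 2 ≤ finrank C V) (P : Module.End C V → Prop)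
    (h0 : P 0)
    (hadd : ∀ u v, P u → P v → P (u + v))
    (hsmul : ∀ (c : C) (u), P u → P (c • u))
    (hbrk : ∀ z, LinearMap.trace C V z = 0 → ∀ u, P u → P (z * u - u * z))
    (htr : ∀ u, P u → LinearMap.trace C V u = 0)
    (x₀ : Module.End C V) (hx0P : P x₀) (hx0 : x₀ ≠ 0) :
    ∀ u, LinearMap.trace C V u = 0 → P u := by
  let S : Submodule C (Module.End C V) :=
    { carrier := setOf P
      add_mem' := fun {u v} hu hv => hadd u v hu hv
      zero_mem' := h0
      smul_mem' := fun c u hu => hsmul c u hu }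
  intro u hu
  exact endKey hrank S (fun z hz x hx => hbrk z hz x hx) (fun x hx => htr x hx) x₀ hx0P hx0 u hu

/-- inner derivation by `g`, as an endomorphism of `End C V`. -/
noncomputable def ado (g : Module.End C V) : Module.End C (Module.End C V) :=
  LinearMap.mulLeft C g - LinearMap.mulRight C g

lemma ado_apply (g x : Module.End C V) : ado g x = g * x - x * g := rfl

lemma mem_eig_ado_iff (g x : Module.End C V) (t : C) :
    x ∈ Module.End.eigenspace (ado g) t ↔ g * x - x * g = t • x := by
  rw [Module.End.mem_eigenspace_iff]; rfl

lemma trace_eq_zero_of_eig_ado (g x : Module.End C V) (t : C) (ht : t ≠ 0)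
    (hx : x ∈ Module.End.eigenspace (ado g) t) : LinearMap.trace C V x = 0 := by
  rw [mem_eig_ado_iff] at hx
  have h := congrArg (LinearMap.trace C V) hx
  rw [map_sub, LinearMap.trace_mul_comm, sub_self, _root_.map_smul, smul_eq_mul] at h
  exact (mul_eq_zero.mp h.symm).resolve_left ht

section projection

variable (f : Module.End C V) (α β : C)

/-- The projection onto the `α`-eigenspace along the `β`-eigenspace. -/
noncomputable def projP (hc : IsCompl (f.eigenspace α) (f.eigenspace β)) : Module.End C V :=
  (f.eigenspace α).subtype ∘ₗ (f.eigenspace α).projectionOnto (f.eigenspace β) hc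

variable (hc : IsCompl (f.eigenspace α) (f.eigenspace β))

lemma projP_apply_left (u : V) (hu : u ∈ f.eigenspace α) : projP f α β hc u = u := by
  simp [projP, Submodule.projectionOnto_apply_of_mem_left hc hu]

lemma projP_apply_right (u : V) (hu : u ∈ f.eigenspace β) : projP f α β hc u = 0 := by
  simp [projP, Submodule.projectionOnto_apply_of_mem_right hc hu]

lemma projP_mem (v : V) : projP f α β hc v ∈ f.eigenspace α := Submodule.coe_mem _

lemma projP_idem : projP f α β hc * projP f α β hc = projP f α β hc := by
  ext v
  simp only [Module.End.mul_apply]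
  exact projP_apply_left f α β hc _ (projP_mem f α β hc v)

lemma f_eq_proj (hab : α ≠ β) : f = β • 1 + (α - β) • projP f α β hc := by
  ext v
  obtain ⟨u, hu, w, hw, rfl⟩ : ∃ u ∈ f.eigenspace α, ∃ w ∈ f.eigenspace β, u + w = v := by
    obtain ⟨u, w, hu, hw, h⟩ := Submodule.codisjoint_iff_exists_add_eq.mp hc.codisjoint v
    exact ⟨u, hu, w, hw, h⟩
  have hfu : f u = α • u := Module.End.mem_eigenspace_iff.mp hu
  have hfw : f w = β • w := Module.End.mem_eigenspace_iff.mp hw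
  simp only [LinearMap.add_apply, LinearMap.smul_apply, Module.End.one_apply, map_add,
    hfu, hfw, projP_apply_left f α β hc u hu, projP_apply_right f α β hc w hw]
  module

lemma ado_f_eq (hab : α ≠ β) : ado f = (α - β) • ado (projP f α β hc) := by
  set p := projP f α β hc with hp
  have hf : f = β • 1 + (α - β) • p := f_eq_proj f α β hc hab
  refine LinearMap.ext fun x => ?_
  rw [LinearMap.smul_apply, ado_apply, ado_apply, hf]
  simp only [add_mul, mul_add, smul_mul_assoc, mul_smul_comm, one_mul, mul_one]
  module

end projection

section eigdims

-- eigenspace of a scalar multiple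
lemma eig_smul (T : Module.End C (Module.End C V)) (c t : C) (hc : c ≠ 0) :
    Module.End.eigenspace (c • T) t = Module.End.eigenspace T (c⁻¹ * t) := by
  ext x
  rw [Module.End.mem_eigenspace_iff, Module.End.mem_eigenspace_iff]
  constructor
  · intro h
    have := congrArg (fun y => c⁻¹ • y) h
    simpa [smul_smul, inv_mul_cancel₀ hc] using this
  · intro h
    have := congrArg (fun y => c • y) h
    simpa [smul_smul, mul_inv_cancel_left₀ hc] using this

end eigdims

section dims

variable (f : Module.End C V) (α β : C)
variable (hc : IsCompl (f.eigenspace α) (f.eigenspace β))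

/-- The parametrization of the `1`-eigenspace of `ad(projP)`. -/
noncomputable def psiMap : ((f.eigenspace β) →ₗ[C] (f.eigenspace α)) →ₗ[C] Module.End C V where
  toFun y := (f.eigenspace α).subtype ∘ₗ y ∘ₗ
    ((f.eigenspace β).projectionOnto (f.eigenspace α) hc.symm)
  map_add' y z := by ext v; simp
  map_smul' c y := by ext v; simp

lemma psiMap_apply (y : (f.eigenspace β) →ₗ[C] (f.eigenspace α)) (v : V) :
    psiMap f α β hc y v
      = ((y ((f.eigenspace β).projectionOnto (f.eigenspace α) hc.symm v) : V)) := rfl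

lemma psiMap_inj : Function.Injective (psiMap f α β hc) := by
  intro y z h
  ext w
  have h2 := congrArg (fun g : Module.End C V => g (w : V)) h
  simp only [psiMap_apply] at h2
  rwa [Submodule.projectionOnto_apply_left hc.symm w] at h2

lemma psiMap_range : LinearMap.range (psiMap f α β hc)
    = Module.End.eigenspace (ado (projP f α β hc)) 1 := by
  apply le_antisymm
  · rintro x ⟨y, rfl⟩
    rw [mem_eig_ado_iff, one_smul]
    ext v
    simp only [LinearMap.sub_apply, Module.End.mul_apply, psiMap_apply]
    rw [Submodule.projectionOnto_apply_of_mem_right hc.symm (projP_mem f α β hc v), map_zero,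
      projP_apply_left f α β hc _ (Submodule.coe_mem _)]
    simp
  · intro x hx
    rw [mem_eig_ado_iff, one_smul] at hx
    set p := projP f α β hc with hp
    have hpp : p * p = p := projP_idem f α β hc
    have hpxp : p * x * p = 0 := by
      have h1 := congrArg (fun z => p * z) hx
      simp only [mul_sub] at h1
      rw [← mul_assoc, hpp] at h1
      -- h1 : p * x - p * (x * p) = p * x
      have h2 : p * (x * p) = 0 := by
        have := sub_eq_iff_eq_add.mp h1
        linear_combination (norm := abel) - this
      rw [mul_assoc]; exact h2
    have hxp : x * p = 0 := by
      have h1 := congrArg (fun z => z * p) hx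
      simp only [sub_mul] at h1
      rw [mul_assoc x p p, hpp] at h1
      -- h1 : p * x * p - x * p = x * p
      rw [hpxp, zero_sub] at h1
      have h2 : x * p + x * p = 0 := by linear_combination (norm := abel) - h1
      have h3 : (2 : C) • (x * p) = 0 := by rw [two_smul]; exact h2
      simpa using h3
    have hpx : p * x = x := by
      rw [hxp, sub_zero] at hx; exact hx
    refine ⟨((f.eigenspace α).projectionOnto (f.eigenspace β) hc) ∘ₗ x ∘ₗ
      (f.eigenspace β).subtype, ?_⟩
    ext v
    rw [psiMap_apply]
    have hq : ((((f.eigenspace β).projectionOnto (f.eigenspace α) hc.symm) v : V))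
        = v - p v := by
      have h5 := Submodule.projection_add_projection_eq_self hc v
      rw [eq_sub_iff_add_eq, add_comm]
      rw [hp]
      exact h5
    simp only [LinearMap.coe_comp, Function.comp_apply, Submodule.coe_subtype]
    rw [hq]
    have h6 : ((((f.eigenspace α).projectionOnto (f.eigenspace β) hc) (x (v - p v)) : V))
        = p (x (v - p v)) := by rw [hp]; rfl
    rw [h6, map_sub, map_sub]
    have hxpv : x (p v) = 0 := by
      have := congrArg (fun g : Module.End C V => g v) hxp
      simpa using this
    have hpxv : p (x v) = x v := by
      have := congrArg (fun g : Module.End C V => g v) hpx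
      simpa using this
    rw [hxpv, map_zero, sub_zero, hpxv]

include hc in
lemma finrank_eig_ado (hab : α ≠ β) :
    finrank C (Module.End.eigenspace (ado f) (α - β))
      = finrank C (f.eigenspace β) * finrank C (f.eigenspace α) := by
  rw [ado_f_eq f α β hc hab, eig_smul _ _ _ (sub_ne_zero.mpr hab),
    inv_mul_cancel₀ (sub_ne_zero.mpr hab), ← psiMap_range f α β hc,
    LinearMap.finrank_range_of_inj (psiMap_inj f α β hc), Module.finrank_linearMap]

include hc in
lemma eig_ado_bot (hab : α ≠ β) (t : C) (h0 : t ≠ 0) (h1 : t ≠ α - β) (h2 : t ≠ β - α) :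
    Module.End.eigenspace (ado f) t = ⊥ := by
  have hcne : α - β ≠ 0 := sub_ne_zero.mpr hab
  rw [ado_f_eq f α β hc hab, eig_smul _ _ _ hcne]
  set s := (α - β)⁻¹ * t with hs
  have hs0 : s ≠ 0 := mul_ne_zero (inv_ne_zero hcne) h0
  have hs1 : s ≠ 1 := by
    intro h
    apply h1
    have h9 := congrArg (fun z => (α - β) * z) h
    simp only [hs, mul_inv_cancel_left₀ hcne, mul_one] at h9
    exact h9
  have hsm1 : s ≠ -1 := by
    intro h
    apply h2
    have := congrArg (fun z => (α - β) * z) h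
    simp only [mul_inv_cancel_left₀ hcne, mul_neg, mul_one] at this
    rw [hs, mul_inv_cancel_left₀ hcne] at this; rw [this]; ring
  rw [eq_bot_iff]
  intro x hx
  rw [mem_eig_ado_iff] at hx
  set p := projP f α β hc with hp
  have hpp : p * p = p := projP_idem f α β hc
  have hL : p * x - p * x * p = s • (p * x) := by
    have h1 := congrArg (fun z => p * z) hx
    simp only [mul_sub, mul_smul_comm] at h1
    rw [← mul_assoc, hpp] at h1
    rw [← mul_assoc] at h1
    exact h1
  have hR : p * x * p - x * p = s • (x * p) := by
    have h1 := congrArg (fun z => z * p) hx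
    simp only [sub_mul, smul_mul_assoc] at h1
    rw [mul_assoc x p p, hpp] at h1
    exact h1
  have hpxp : p * x * p = 0 := by
    have h1 := congrArg (fun z => z * p) hL
    simp only [sub_mul, smul_mul_assoc] at h1
    rw [mul_assoc (p*x) p p, hpp] at h1
    -- h1 : p*x*p - p*x*p = s • (p*x*p)
    rw [sub_self] at h1
    have := h1.symm
    rw [smul_eq_zero] at this
    exact this.resolve_left hs0
  have hpx : p * x = 0 := by
    rw [hpxp, sub_zero] at hL
    have h2 : ((1 : C) - s) • (p * x) = 0 := by
      rw [sub_smul, one_smul, ← hL, sub_self]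
    rcases smul_eq_zero.mp h2 with h | h
    · exact absurd (sub_eq_zero.mp h).symm hs1
    · exact h
  have hxp : x * p = 0 := by
    rw [hpxp, zero_sub] at hR
    -- hR : -(x * p) = s • (x * p)
    have h2 : ((-1 : C) - s) • (x * p) = 0 := by
      rw [sub_smul, neg_smul, one_smul, ← hR, sub_self]
    rcases smul_eq_zero.mp h2 with h | h
    · exact absurd (sub_eq_zero.mp h).symm hsm1
    · exact h
  rw [hpx, hxp, sub_zero] at hx
  have : x = 0 := by
    have := hx.symm
    rw [smul_eq_zero] at this
    exact this.resolve_left hs0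
  simp [this]

end dims


end Stmt15Aux

section MainAux

open Stmt15Aux

variable {C : Type*} [Field C] [CharZero C]

private lemma contradiction_step
    {n d : ℕ} (hn : 2 ≤ n)
    {a : Fin d → ℕ} (hinj : Function.Injective a)
    (ha1 : ∀ i, 1 ≤ a i) (ha2 : ∀ i, a i < n)
    (hsum : ∀ i j, a i ≠ n - a j)
    {W : Fin d → Type*} [∀ i, AddCommGroup (W i)] [∀ i, Module C (W i)]
    [∀ i, FiniteDimensional C (W i)] (hdim : ∀ i, Module.finrank C (W i) = n)
    (k : LieSubalgebra C (∀ i, Module.End C (W i)))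
    (hsl : ∀ x ∈ k, ∀ i, LinearMap.trace C (W i) (x i) = 0)
    (hsurj : ∀ i, ∀ u : Module.End C (W i), LinearMap.trace C (W i) u = 0 →
      ∃ x ∈ k, x i = u)
    (f : ∀ i, Module.End C (W i)) (hfk : f ∈ k)
    (hf : ∀ i, ∃ α β : C, α ≠ β ∧
      IsCompl ((f i).eigenspace α) ((f i).eigenspace β) ∧
      Module.finrank C ((f i).eigenspace α) = a i ∧
      Module.finrank C ((f i).eigenspace β) = n - a i)
    (s : Finset (Fin d)) (j : Fin d) (hjs : j ∉ s)
    (hsurjS : ∀ x : ∀ i, Module.End C (W i),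
      (∀ i, LinearMap.trace C (W i) (x i) = 0) → (∀ i, i ∉ s → x i = 0) →
      ∃ y, y ∈ k ∧ ∀ i ∈ s, y i = x i)
    (hK0 : ∀ y, y ∈ k → (∀ i ∈ s, y i = 0) → y j = 0)
    (R : ∀ i : Fin d, Module.End C (W i) → Module.End C (W j) → Prop)
    (hRdef : ∀ i u v, R i u v ↔
      ∃ y, y ∈ k ∧ (∀ l ∈ s, l ≠ i → y l = 0) ∧ y i = u ∧ y j = v) :
    False := by
  classical
  have hbr : ∀ (y z : ∀ i, Module.End C (W i)) (i : Fin d),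
      ⁅y, z⁆ i = y i * z i - z i * y i := fun y z i => rfl
  have hrank : ∀ i, 2 ≤ Module.finrank C (W i) := fun i => by rw [hdim i]; exact hn
  -- functionality in the second argument
  have hfun : ∀ i ∈ s, ∀ u v v', R i u v → R i u v' → v = v' := by
    intro i hi u v v' h1 h2
    rw [hRdef] at h1 h2
    obtain ⟨y, hy, hys, hyi, hyj⟩ := h1
    obtain ⟨y', hy', hys', hyi', hyj'⟩ := h2
    have h0 := hK0 (y - y') (sub_mem hy hy') (fun l hl => by
      show y l - y' l = 0
      rcases eq_or_ne l i with rfl | hli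
      · rw [hyi, hyi', sub_self]
      · rw [hys l hl hli, hys' l hl hli, sub_self])
    have h3 : y j - y' j = 0 := h0
    rw [hyj, hyj'] at h3
    exact sub_eq_zero.mp h3
  -- totality on traceless elements
  have htot : ∀ i ∈ s, ∀ u : Module.End C (W i), LinearMap.trace C (W i) u = 0 →
      ∃ v, R i u v := by
    intro i hi u hu
    obtain ⟨y, hy, hys⟩ := hsurjS (Function.update (fun l => (0 : Module.End C (W l))) i u)
      (fun l => by
        rcases eq_or_ne l i with rfl | h
        · rwa [Function.update_self]
        · rw [Function.update_of_ne h]; exact map_zero _)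
      (fun l hl => Function.update_of_ne (fun he => hl (by rw [he]; exact hi)) _ _)
    refine ⟨y j, (hRdef _ _ _).mpr ⟨y, hy, fun l hl hli => ?_, ?_, rfl⟩⟩
    · rw [hys l hl, Function.update_of_ne hli]
    · rw [hys i hi, Function.update_self]
  -- algebraic closure properties of R
  have hRzero : ∀ i, R i 0 0 := fun i => (hRdef _ _ _).mpr
    ⟨0, zero_mem _, fun _ _ _ => rfl, rfl, rfl⟩
  have hRadd : ∀ i u v u' v', R i u v → R i u' v' → R i (u + u') (v + v') := by
    intro i u v u' v' h1 h2
    rw [hRdef] at h1 h2 ⊢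
    obtain ⟨y, hy, hys, hyi, hyj⟩ := h1
    obtain ⟨y', hy', hys', hyi', hyj'⟩ := h2
    exact ⟨y + y', add_mem hy hy', fun l hl hli => by
      show y l + y' l = 0; rw [hys l hl hli, hys' l hl hli, add_zero],
      by show y i + y' i = _; rw [hyi, hyi'],
      by show y j + y' j = _; rw [hyj, hyj']⟩
  have hRsub : ∀ i u v u' v', R i u v → R i u' v' → R i (u - u') (v - v') := by
    intro i u v u' v' h1 h2
    rw [hRdef] at h1 h2 ⊢
    obtain ⟨y, hy, hys, hyi, hyj⟩ := h1
    obtain ⟨y', hy', hys', hyi', hyj'⟩ := h2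
    exact ⟨y - y', sub_mem hy hy', fun l hl hli => by
      show y l - y' l = 0; rw [hys l hl hli, hys' l hl hli, sub_zero],
      by show y i - y' i = _; rw [hyi, hyi'],
      by show y j - y' j = _; rw [hyj, hyj']⟩
  have hRsmul : ∀ i (c : C) u v, R i u v → R i (c • u) (c • v) := by
    intro i c u v h1
    rw [hRdef] at h1 ⊢
    obtain ⟨y, hy, hys, hyi, hyj⟩ := h1
    exact ⟨c • y, k.smul_mem c hy, fun l hl hli => by
      show c • y l = 0; rw [hys l hl hli, smul_zero],
      by show c • y i = _; rw [hyi],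
      by show c • y j = _; rw [hyj]⟩
  have hbrR : ∀ i u v u' v', R i u v → R i u' v' →
      R i (u * u' - u' * u) (v * v' - v' * v) := by
    intro i u v u' v' h1 h2
    rw [hRdef] at h1 h2 ⊢
    obtain ⟨y, hy, hys, hyi, hyj⟩ := h1
    obtain ⟨y', hy', hys', hyi', hyj'⟩ := h2
    refine ⟨⁅y, y'⁆, k.lie_mem hy hy', fun l hl hli => ?_, ?_, ?_⟩
    · rw [hbr, hys l hl hli, hys' l hl hli]; simp
    · rw [hbr, hyi, hyi']
    · rw [hbr, hyj, hyj']
  -- commutation across distinct indices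
  have hcomm : ∀ i ∈ s, ∀ i' ∈ s, i ≠ i' → ∀ u v u' v', R i u v → R i' u' v' →
      v * v' - v' * v = 0 := by
    intro i hi i' hi' hne u v u' v' h1 h2
    rw [hRdef] at h1 h2
    obtain ⟨y, hy, hys, hyi, hyj⟩ := h1
    obtain ⟨y', hy', hys', hyi', hyj'⟩ := h2
    have h0 := hK0 ⁅y, y'⁆ (k.lie_mem hy hy') (fun l hl => by
      rw [hbr]
      rcases eq_or_ne l i with rfl | hli
      · rw [hys' l hl (fun h => hne h), mul_zero, zero_mul, sub_zero]
      · rw [hys l hl hli, mul_zero, zero_mul, sub_zero])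
    rw [hbr, hyj, hyj'] at h0
    exact h0
  -- decomposition of the j-component of any element of k
  have hdecomp : ∀ z, z ∈ k → ∃ v : Fin d → Module.End C (W j),
      (∀ i ∈ s, R i (z i) (v i)) ∧ z j = ∑ i ∈ s, v i := by
    intro z hz
    have pick : ∀ i : Fin d, ∃ y : ∀ l, Module.End C (W l),
        (i ∈ s → (y ∈ k ∧ (∀ l ∈ s, l ≠ i → y l = 0) ∧ y i = z i)) := by
      intro i
      by_cases hi : i ∈ s
      · obtain ⟨v, hv⟩ := htot i hi (z i) (hsl z hz i)
        rw [hRdef] at hv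
        obtain ⟨y, hy, hys, hyi, _⟩ := hv
        exact ⟨y, fun _ => ⟨hy, hys, hyi⟩⟩
      · exact ⟨0, fun h => absurd h hi⟩
    choose g hg using pick
    have hYk : (∑ i ∈ s, g i) ∈ k := sum_mem (fun i hi => (hg i hi).1)
    have hvan : ∀ l ∈ s, (z - ∑ i ∈ s, g i) l = 0 := by
      intro l hl
      show z l - (∑ i ∈ s, g i) l = 0
      rw [Finset.sum_apply l s g,
        Finset.sum_eq_single_of_mem l hl (fun b hb hbl => (hg b hb).2.1 l hl (Ne.symm hbl)),
        (hg l hl).2.2, sub_self]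
    have hj0 : z j - (∑ i ∈ s, g i) j = 0 := hK0 _ (sub_mem hz hYk) hvan
    refine ⟨fun i => g i j, fun i hi => (hRdef _ _ _).mpr
      ⟨g i, (hg i hi).1, (hg i hi).2.1, (hg i hi).2.2, rfl⟩, ?_⟩
    rw [sub_eq_zero] at hj0
    rw [hj0, Finset.sum_apply]
  -- a noncommuting traceless pair in End (W j)
  obtain ⟨v₁, w₁, hv₁tr, hw₁tr, hv₁ne, hvw⟩ := Stmt15Aux.exists_traceless_pair (C := C) (hrank j)
  obtain ⟨zk, hzk, hzkj⟩ := hsurj j v₁ hv₁tr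
  obtain ⟨vv, hvvR, hvvsum⟩ := hdecomp zk hzk
  have hi0ex : ∃ i0 ∈ s, vv i0 ≠ 0 := by
    by_contra hcon
    push_neg at hcon
    apply hv₁ne
    rw [← hzkj, hvvsum]
    exact Finset.sum_eq_zero (fun i hi => hcon i hi)
  obtain ⟨i0, hi0, hvv0⟩ := hi0ex
  -- the image of R i0 is full
  have hImbrk : ∀ i, ∀ z : Module.End C (W j), LinearMap.trace C (W j) z = 0 →
      ∀ v, (∃ u, R i u v) → ∃ u', R i u' (z * v - v * z) := by
    intro i z hz v ⟨u, hu⟩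
    obtain ⟨zk', hzk', hzk'j⟩ := hsurj j z hz
    rw [hRdef] at hu
    obtain ⟨y, hy, hys, hyi, hyj⟩ := hu
    refine ⟨zk' i * u - u * zk' i, (hRdef _ _ _).mpr
      ⟨⁅zk', y⁆, k.lie_mem hzk' hy, fun l hl hli => ?_, ?_, ?_⟩⟩
    · rw [hbr, hys l hl hli]; simp
    · rw [hbr, hyi]
    · rw [hbr, hyj, hzk'j]
  have hImtr : ∀ i v, (∃ u, R i u v) → LinearMap.trace C (W j) v = 0 := by
    intro i v ⟨u, hu⟩
    rw [hRdef] at hu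
    obtain ⟨y, hy, _, _, hyj⟩ := hu
    rw [← hyj]
    exact hsl y hy j
  have hIm : ∀ v : Module.End C (W j), LinearMap.trace C (W j) v = 0 → ∃ u, R i0 u v := by
    refine Stmt15Aux.endKey' (hrank j) _ ⟨0, hRzero i0⟩ ?_ ?_ (hImbrk i0) (hImtr i0)
      (vv i0) ⟨zk i0, hvvR i0 hi0⟩ hvv0
    · rintro v v' ⟨u, hu⟩ ⟨u', hu'⟩
      exact ⟨u + u', hRadd i0 _ _ _ _ hu hu'⟩
    · rintro c v ⟨u, hu⟩
      exact ⟨c • u, hRsmul i0 c _ _ hu⟩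
  -- images at other indices vanish
  have hzeroIm : ∀ i ∈ s, i ≠ i0 → ∀ v, (∃ u, R i u v) → v = 0 := by
    intro i hi hne v hv
    by_contra hvne
    have hImi : ∀ v' : Module.End C (W j), LinearMap.trace C (W j) v' = 0 →
        ∃ u, R i u v' := by
      refine Stmt15Aux.endKey' (hrank j) _ ⟨0, hRzero i⟩ ?_ ?_ (hImbrk i) (hImtr i) v hv hvne
      · rintro va vb ⟨u, hu⟩ ⟨u', hu'⟩
        exact ⟨u + u', hRadd i _ _ _ _ hu hu'⟩
      · rintro c va ⟨u, hu⟩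
        exact ⟨c • u, hRsmul i c _ _ hu⟩
    obtain ⟨ua, hua⟩ := hIm v₁ hv₁tr
    obtain ⟨ub, hub⟩ := hImi w₁ hw₁tr
    exact hvw (hcomm i0 hi0 i hi (Ne.symm hne) ua v₁ ub w₁ hua hub)
  -- the kernel at i0 vanishes
  have hNZ0 : ∀ u, R i0 u 0 → u = 0 := by
    intro u hu
    by_contra hune
    have hNZfull : ∀ u' : Module.End C (W i0), LinearMap.trace C (W i0) u' = 0 →
        R i0 u' 0 := by
      refine Stmt15Aux.endKey' (hrank i0) _ (hRzero i0) ?_ ?_ ?_ ?_ u hu hune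
      · intro ua ub h1 h2
        have := hRadd i0 _ _ _ _ h1 h2
        rwa [add_zero] at this
      · intro c ua h1
        have := hRsmul i0 c _ _ h1
        rwa [smul_zero] at this
      · intro z hz ua h1
        obtain ⟨zk'', hzk'', hzk''i⟩ := hsurj i0 z hz
        rw [hRdef] at h1 ⊢
        obtain ⟨y, hy, hys, hyi, hyj⟩ := h1
        refine ⟨⁅zk'', y⁆, k.lie_mem hzk'' hy, fun l hl hli => ?_, ?_, ?_⟩
        · rw [hbr, hys l hl hli]; simp
        · rw [hbr, hyi, hzk''i]
        · rw [hbr, hyj]; simp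
      · intro ua h1
        rw [hRdef] at h1
        obtain ⟨y, hy, _, hyi, _⟩ := h1
        rw [← hyi]
        exact hsl y hy i0
    obtain ⟨ua, hua⟩ := hIm v₁ hv₁tr
    have huatr : LinearMap.trace C (W i0) ua = 0 := by
      have h1 := hua
      rw [hRdef] at h1
      obtain ⟨y, hy, _, hyi, _⟩ := h1
      rw [← hyi]
      exact hsl y hy i0
    exact hv₁ne (hfun i0 hi0 ua v₁ 0 hua (hNZfull ua huatr))
  -- uniqueness in the first argument
  have huniq1 : ∀ u u' v, R i0 u v → R i0 u' v → u = u' := by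
    intro u u' v h1 h2
    have h3 := hRsub i0 u v u' v h1 h2
    rw [sub_self] at h3
    exact sub_eq_zero.mp (hNZ0 _ h3)
  -- transport of f
  obtain ⟨vf, hvfR, hvfsum⟩ := hdecomp f hfk
  have hRf : R i0 (f i0) (f j) := by
    have hfj : f j = vf i0 := by
      rw [hvfsum,
        Finset.sum_eq_single_of_mem i0 hi0
          (fun b hb hbne => hzeroIm b hb hbne (vf b) ⟨f b, hvfR b hb⟩)]
    rw [hfj]
    exact hvfR i0 hi0
  -- eigen data
  obtain ⟨α, β, hab, hco, hda, hdb⟩ := hf i0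
  obtain ⟨α', β', hab', hco', hda', hdb'⟩ := hf j
  have ht0 : α - β ≠ 0 := sub_ne_zero.mpr hab
  have hdimA : finrank C (Module.End.eigenspace (Stmt15Aux.ado (f i0)) (α - β))
      = (n - a i0) * a i0 := by
    rw [Stmt15Aux.finrank_eig_ado (f i0) α β hco hab, hda, hdb]
  -- membership transport between eigenspaces
  have hmemB : ∀ u v, R i0 u v →
      u ∈ Module.End.eigenspace (Stmt15Aux.ado (f i0)) (α - β) →
      v ∈ Module.End.eigenspace (Stmt15Aux.ado (f j)) (α - β) := by
    intro u v huv huA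
    have h1 := hbrR i0 (f i0) (f j) u v hRf huv
    have h2 : f i0 * u - u * f i0 = (α - β) • u :=
      (Stmt15Aux.mem_eig_ado_iff (f i0) u (α - β)).mp huA
    rw [h2] at h1
    have h3 := hRsmul i0 (α - β) u v huv
    rw [Stmt15Aux.mem_eig_ado_iff]
    exact hfun i0 hi0 _ _ _ h1 h3
  have hmemA : ∀ u v, R i0 u v →
      v ∈ Module.End.eigenspace (Stmt15Aux.ado (f j)) (α - β) →
      u ∈ Module.End.eigenspace (Stmt15Aux.ado (f i0)) (α - β) := by
    intro u v huv hvB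
    have h1 := hbrR i0 (f i0) (f j) u v hRf huv
    have h2 : f j * v - v * f j = (α - β) • v :=
      (Stmt15Aux.mem_eig_ado_iff (f j) v (α - β)).mp hvB
    rw [h2] at h1
    have h3 := hRsmul i0 (α - β) u v huv
    rw [Stmt15Aux.mem_eig_ado_iff]
    exact huniq1 _ _ _ h1 h3
  -- the two eigenspaces have the same dimension
  have hexF : ∀ ua : Module.End.eigenspace (Stmt15Aux.ado (f i0)) (α - β),
      ∃ v, R i0 (ua : Module.End C (W i0)) v := fun ua =>
    htot i0 hi0 ua (Stmt15Aux.trace_eq_zero_of_eig_ado (f i0) ua (α - β) ht0 ua.2)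
  choose Fv hFv using hexF
  have hFvB : ∀ ua, Fv ua ∈ Module.End.eigenspace (Stmt15Aux.ado (f j)) (α - β) :=
    fun ua => hmemB _ _ (hFv ua) ua.2
  let F : (Module.End.eigenspace (Stmt15Aux.ado (f i0)) (α - β)) →ₗ[C]
      (Module.End.eigenspace (Stmt15Aux.ado (f j)) (α - β)) :=
    { toFun := fun ua => ⟨Fv ua, hFvB ua⟩
      map_add' := fun ua ub => Subtype.ext
        (hfun i0 hi0 _ _ _ (hFv (ua + ub)) (hRadd i0 _ _ _ _ (hFv ua) (hFv ub)))
      map_smul' := fun c ua => Subtype.ext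
        (hfun i0 hi0 _ _ _ (hFv (c • ua)) (hRsmul i0 c _ _ (hFv ua))) }
  have hFinj : Function.Injective F := by
    intro ua ub h
    have h2 : Fv ua = Fv ub := congrArg Subtype.val h
    exact Subtype.ext (huniq1 _ _ _ (hFv ua) (h2 ▸ hFv ub))
  have hexG : ∀ vb : Module.End.eigenspace (Stmt15Aux.ado (f j)) (α - β),
      ∃ u, R i0 u (vb : Module.End C (W j)) := fun vb =>
    hIm vb (Stmt15Aux.trace_eq_zero_of_eig_ado (f j) vb (α - β) ht0 vb.2)
  choose Gu hGu using hexG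
  have hGuA : ∀ vb, Gu vb ∈ Module.End.eigenspace (Stmt15Aux.ado (f i0)) (α - β) :=
    fun vb => hmemA _ _ (hGu vb) vb.2
  let G : (Module.End.eigenspace (Stmt15Aux.ado (f j)) (α - β)) →ₗ[C]
      (Module.End.eigenspace (Stmt15Aux.ado (f i0)) (α - β)) :=
    { toFun := fun vb => ⟨Gu vb, hGuA vb⟩
      map_add' := fun va vb => Subtype.ext
        (huniq1 _ _ _ (hGu (va + vb)) (hRadd i0 _ _ _ _ (hGu va) (hGu vb)))
      map_smul' := fun c va => Subtype.ext
        (huniq1 _ _ _ (hGu (c • va)) (hRsmul i0 c _ _ (hGu va))) }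
  have hGinj : Function.Injective G := by
    intro va vb h
    have h2 : Gu va = Gu vb := congrArg Subtype.val h
    exact Subtype.ext (hfun i0 hi0 _ _ _ (hGu va) (h2 ▸ hGu vb))
  have hABeq : finrank C (Module.End.eigenspace (Stmt15Aux.ado (f i0)) (α - β))
      = finrank C (Module.End.eigenspace (Stmt15Aux.ado (f j)) (α - β)) :=
    le_antisymm (LinearMap.finrank_le_finrank_of_injective hFinj)
      (LinearMap.finrank_le_finrank_of_injective hGinj)
  have hApos : 0 < finrank C (Module.End.eigenspace (Stmt15Aux.ado (f i0)) (α - β)) := by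
    rw [hdimA]
    have h1 := ha1 i0
    have h2 := ha2 i0
    exact Nat.mul_pos (by omega) (by omega)
  -- identify the dimension of B
  have hprod : (n - a i0) * a i0 = (n - a j) * a j := by
    by_cases h1 : (α - β) = α' - β'
    · rw [← hdimA, hABeq, h1, Stmt15Aux.finrank_eig_ado (f j) α' β' hco' hab', hda', hdb']
    · by_cases h2 : (α - β) = β' - α'
      · rw [← hdimA, hABeq, h2,
          Stmt15Aux.finrank_eig_ado (f j) β' α' hco'.symm hab'.symm, hda', hdb']
        exact Nat.mul_comm _ _
      · exfalso
        have hbot := Stmt15Aux.eig_ado_bot (f j) α' β' hco' hab' (α - β) ht0 h1 h2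
        rw [hABeq, hbot, finrank_bot] at hApos
        exact lt_irrefl 0 hApos
  -- arithmetic endgame
  have hcast : ((n : ℤ) - a i0) * a i0 = ((n : ℤ) - a j) * a j := by
    have e1 : ((n - a i0 : ℕ) : ℤ) = (n : ℤ) - a i0 := by
      rw [Nat.cast_sub (le_of_lt (ha2 i0))]
    have e2 : ((n - a j : ℕ) : ℤ) = (n : ℤ) - a j := by
      rw [Nat.cast_sub (le_of_lt (ha2 j))]
    have := congrArg (fun m : ℕ => (m : ℤ)) hprod
    push_cast at this
    rw [Nat.cast_sub (le_of_lt (ha2 i0)), Nat.cast_sub (le_of_lt (ha2 j))] at this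
    exact_mod_cast this
  have hfactor : ((a i0 : ℤ) - a j) * ((n : ℤ) - a i0 - a j) = 0 := by
    linear_combination hcast
  rcases mul_eq_zero.mp hfactor with h | h
  · have he : (a i0 : ℤ) = a j := sub_eq_zero.mp h
    have : a i0 = a j := by exact_mod_cast he
    have : i0 = j := hinj this
    exact hjs (this ▸ hi0)
  · have he : (n : ℤ) = a i0 + a j := by linarith [sub_eq_zero.mp h]
    have hnn : n = a i0 + a j := by exact_mod_cast he
    exact hsum i0 j (by omega)

end MainAux

/-- `C` algebraically closed of characteristic 0, `n ≥ 2`,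
`a₁, …, a_d` distinct integers in `[1, n-1]` with `a_i ≠ n - a_j` for all
`i, j`; `W₁, …, W_d` are `n`-dimensional `C`-vector spaces, and
`k ⊆ ⊕_i sl(W_i)` is a semisimple Lie subalgebra which projects onto each
`sl(W_i)` and contains a semisimple element `f` acting on each `W_i` with
exactly two eigenvalues of multiplicities `a_i` and `n - a_i`.
Then `k = ⊕_i sl(W_i)`. -/
theorem stmt15 (C : Type*) [Field C] [IsAlgClosed C] [CharZero C]
    (n d : ℕ) (hn : 2 ≤ n) (hd : 0 < d)
    (a : Fin d → ℕ) (hinj : Function.Injective a)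
    (ha1 : ∀ i, 1 ≤ a i) (ha2 : ∀ i, a i < n)
    (hsum : ∀ i j, a i ≠ n - a j)
    (W : Fin d → Type*) [∀ i, AddCommGroup (W i)] [∀ i, Module C (W i)]
    [∀ i, FiniteDimensional C (W i)] (hdim : ∀ i, Module.finrank C (W i) = n)
    (k : LieSubalgebra C (∀ i, Module.End C (W i)))
    (hss : LieAlgebra.IsSemisimple C k)
    (hsl : ∀ x ∈ k, ∀ i, LinearMap.trace C (W i) (x i) = 0)
    (hsurj : ∀ i, ∀ u : Module.End C (W i), LinearMap.trace C (W i) u = 0 →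
      ∃ x ∈ k, x i = u)
    (f : ∀ i, Module.End C (W i)) (hfk : f ∈ k)
    (hf : ∀ i, ∃ α β : C, α ≠ β ∧
      IsCompl ((f i).eigenspace α) ((f i).eigenspace β) ∧
      Module.finrank C ((f i).eigenspace α) = a i ∧
      Module.finrank C ((f i).eigenspace β) = n - a i) :
    ∀ x : ∀ i, Module.End C (W i),
      (∀ i, LinearMap.trace C (W i) (x i) = 0) → x ∈ k := by
  classical
  have hbr : ∀ (y z : ∀ i, Module.End C (W i)) (i : Fin d),
      ⁅y, z⁆ i = y i * z i - z i * y i := fun y z i => rfl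
  have hrank : ∀ i, Module.finrank C (W i) = n := hdim
  have key : ∀ s : Finset (Fin d), ∀ x : ∀ i, Module.End C (W i),
      (∀ i, LinearMap.trace C (W i) (x i) = 0) → (∀ i, i ∉ s → x i = 0) →
      ∃ y, y ∈ k ∧ ∀ i ∈ s, y i = x i := by
    intro s
    induction s using Finset.induction_on with
    | empty =>
        intro x hxtr hsupp
        exact ⟨0, k.zero_mem, fun i hi => absurd hi (Finset.notMem_empty i)⟩
    | @insert j s hjs ih =>
        intro x hxtr hsupp
        by_cases hKex : ∃ u, (∃ y, y ∈ k ∧ (∀ i ∈ s, y i = 0) ∧ y j = u) ∧ u ≠ 0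
        · obtain ⟨u0, hu0mem, hu0ne⟩ := hKex
          have hfull : ∀ u, LinearMap.trace C (W j) u = 0 →
              ∃ y, y ∈ k ∧ (∀ i ∈ s, y i = 0) ∧ y j = u := by
            refine Stmt15Aux.endKey' (by rw [hdim j]; exact hn) _
              ⟨0, k.zero_mem, fun i _ => rfl, rfl⟩ ?_ ?_ ?_ ?_ u0 hu0mem hu0ne
            · rintro u v ⟨y, hy, hys, rfl⟩ ⟨z, hz, hzs, rfl⟩
              exact ⟨y + z, k.add_mem hy hz, fun i hi => by
                show y i + z i = 0; rw [hys i hi, hzs i hi, add_zero], rfl⟩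
            · rintro c u ⟨y, hy, hys, rfl⟩
              exact ⟨c • y, k.smul_mem c hy, fun i hi => by
                show c • y i = 0; rw [hys i hi, smul_zero], rfl⟩
            · rintro z hz u ⟨y, hy, hys, rfl⟩
              obtain ⟨zk, hzk, hzkj⟩ := hsurj j z hz
              refine ⟨⁅zk, y⁆, k.lie_mem hzk hy, fun i hi => ?_, ?_⟩
              · rw [hbr, hys i hi]; simp
              · rw [hbr, hzkj]
            · rintro u ⟨y, hy, _, rfl⟩
              exact hsl y hy j
          obtain ⟨y₀, hy₀, hy₀s⟩ := ih (fun l => if l ∈ s then x l else 0)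
            (fun l => by by_cases h : l ∈ s <;> simp [h, hxtr l])
            (fun l hl => by simp [hl])
          obtain ⟨z, hz, hzs, hzj⟩ := hfull (x j - y₀ j)
            (by rw [map_sub, hxtr j, hsl y₀ hy₀ j, sub_zero])
          refine ⟨y₀ + z, k.add_mem hy₀ hz, fun i hi => ?_⟩
          rcases Finset.mem_insert.mp hi with rfl | his
          · show y₀ i + z i = x i
            rw [hzj]; abel
          · show y₀ i + z i = x i
            rw [hzs i his, add_zero, hy₀s i his, if_pos his]
        · exfalso
          have hK0 : ∀ y, y ∈ k → (∀ i ∈ s, y i = 0) → y j = 0 := by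
            intro y hy hys
            by_contra h
            exact hKex ⟨y j, ⟨y, hy, hys, rfl⟩, h⟩
          exact contradiction_step hn hinj ha1 ha2 hsum hdim k hsl hsurj f hfk hf s j hjs
            ih hK0
            (fun i u v => ∃ y, y ∈ k ∧ (∀ l ∈ s, l ≠ i → y l = 0) ∧ y i = u ∧ y j = v)
            (fun _ _ _ => Iff.rfl)
  intro x hx
  obtain ⟨y, hy, hyx⟩ := key Finset.univ x hx (fun i hi => absurd (Finset.mem_univ i) hi)
  have : y = x := funext fun i => hyx i (Finset.mem_univ i)
  rwa [← this]
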